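/- Let M be a pointed metric space such that SA(M, ℝ) is dense in Lip₀(M, ℝ), let ρ ∈ [0,1), and let Y be a real Banach space having ACK structure with parameter ρ witnessed by a 1-norming set Γ ⊆ B_{Y*}. Then every Γ-flat map T ∈ Lip₀(M, Y) lies in the ‖·‖_L-closure of SA(M, Y). -/

import Mathlib

open Set Metric NNReal MeasureTheory

/-- A Lipschitz map vanishing at the base point `z`, i.e. an element of `Lip₀(M,Y)`. -/
def IsLip0 {M Y : Type*} [MetricSpace M] [NormedAddCommGroup Y]
    (z : M) (F : M → Y) : Prop :=
  (∃ K : ℝ≥0, LipschitzWith K F) ∧ F z = 0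

/-- The Lipschitz norm `‖F‖_L = sup {‖F p - F q‖ / d(p,q) : p ≠ q}`. -/
noncomputable def lipNorm {M Y : Type*} [MetricSpace M] [NormedAddCommGroup Y]
    (F : M → Y) : ℝ :=
  sSup {r : ℝ | ∃ p q : M, p ≠ q ∧ r = ‖F p - F q‖ / dist p q}

/-- `F` strongly attains its norm. -/
def StronglyAttains {M Y : Type*} [MetricSpace M] [NormedAddCommGroup Y]
    (F : M → Y) : Prop :=
  ∃ p q : M, p ≠ q ∧ ‖F p - F q‖ = lipNorm F * dist p q

/-- `F` is Lipschitz compact: its Lipschitz image is relatively compact. -/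
def IsLipCompact {M Y : Type*} [MetricSpace M] [NormedAddCommGroup Y] [NormedSpace ℝ Y]
    (F : M → Y) : Prop :=
  IsCompact (closure {y : Y | ∃ p q : M, p ≠ q ∧ y = (dist p q)⁻¹ • (F p - F q)})

/-- The pair `(M,Y)` has the Lip-BPB property witnessed by the function `η`. -/
def LipBPBWith (M : Type*) [MetricSpace M] (z : M)
    (Y : Type*) [NormedAddCommGroup Y] (η : ℝ → ℝ) : Prop :=
  (∀ ε > 0, η ε > 0) ∧
  ∀ ε > 0, ∀ F : M → Y, IsLip0 z F → lipNorm F = 1 →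
    ∀ p q : M, p ≠ q → ‖F p - F q‖ > (1 - η ε) * dist p q →
      ∃ G : M → Y, IsLip0 z G ∧ ∃ r s : M, r ≠ s ∧
        ‖G r - G s‖ = dist r s ∧ lipNorm G = 1 ∧
        lipNorm (fun x => G x - F x) < ε ∧
        (dist p r + dist q s) / dist p q < ε

/-- The pair `(M,Y)` has the Lip-BPB property. -/
def LipBPB (M : Type*) [MetricSpace M] (z : M)
    (Y : Type*) [NormedAddCommGroup Y] : Prop :=
  ∃ η : ℝ → ℝ, LipBPBWith M z Y η

/-- The pair `(M,Y)` has the Lip-BPB property for Lipschitz compact maps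
witnessed by the function `η`. -/
def LipBPBCompactWith (M : Type*) [MetricSpace M] (z : M)
    (Y : Type*) [NormedAddCommGroup Y] [NormedSpace ℝ Y] (η : ℝ → ℝ) : Prop :=
  (∀ ε > 0, η ε > 0) ∧
  ∀ ε > 0, ∀ F : M → Y, IsLip0 z F → IsLipCompact F → lipNorm F = 1 →
    ∀ p q : M, p ≠ q → ‖F p - F q‖ > (1 - η ε) * dist p q →
      ∃ G : M → Y, IsLip0 z G ∧ IsLipCompact G ∧ ∃ r s : M, r ≠ s ∧
        ‖G r - G s‖ = dist r s ∧ lipNorm G = 1 ∧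
        lipNorm (fun x => G x - F x) < ε ∧
        (dist p r + dist q s) / dist p q < ε

/-- The pair `(M,Y)` has the Lip-BPB property for Lipschitz compact maps. -/
def LipBPBCompact (M : Type*) [MetricSpace M] (z : M)
    (Y : Type*) [NormedAddCommGroup Y] [NormedSpace ℝ Y] : Prop :=
  ∃ η : ℝ → ℝ, LipBPBCompactWith M z Y η

/-- `SA(M,Y)` is dense in `Lip₀(M,Y)`. -/
def SADense (M : Type*) [MetricSpace M] (z : M)
    (Y : Type*) [NormedAddCommGroup Y] : Prop :=
  ∀ F : M → Y, IsLip0 z F → ∀ ε > 0,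
    ∃ G : M → Y, IsLip0 z G ∧ StronglyAttains G ∧ lipNorm (fun x => G x - F x) < ε

/-- `SA_K(M,Y)` is dense in `Lipc(M,Y)`. -/
def SAKDense (M : Type*) [MetricSpace M] (z : M)
    (Y : Type*) [NormedAddCommGroup Y] [NormedSpace ℝ Y] : Prop :=
  ∀ F : M → Y, IsLip0 z F → IsLipCompact F → ∀ ε > 0,
    ∃ G : M → Y, IsLip0 z G ∧ IsLipCompact G ∧ StronglyAttains G ∧
      lipNorm (fun x => G x - F x) < ε

/-- A set of functionals on `Y` is weak-star open. -/
def IsWeakStarOpen {Y : Type*} [NormedAddCommGroup Y] [NormedSpace ℝ Y]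
    (U : Set (Y →L[ℝ] ℝ)) : Prop :=
  IsOpen (X := WeakDual ℝ Y) (StrongDual.toWeakDual '' U)

/-- `Γ ⊆ B_{Y*}` is a 1-norming set. -/
def IsOneNorming {Y : Type*} [NormedAddCommGroup Y] [NormedSpace ℝ Y]
    (Γ : Set (Y →L[ℝ] ℝ)) : Prop :=
  (∀ φ ∈ Γ, ‖φ‖ ≤ 1) ∧ ∀ y : Y, ‖y‖ = sSup {t : ℝ | ∃ φ ∈ Γ, t = |φ y|}

/-- `Y` has ACK structure with parameter `ρ`, witnessed by the 1-norming set `Γ`. -/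
def ACKWith (Y : Type*) [NormedAddCommGroup Y] [NormedSpace ℝ Y]
    (ρ : ℝ) (Γ : Set (Y →L[ℝ] ℝ)) : Prop :=
  IsOneNorming Γ ∧
  ∀ ε > (0 : ℝ), ∀ U : Set (Y →L[ℝ] ℝ), U.Nonempty → U ⊆ Γ →
    (∃ W : Set (Y →L[ℝ] ℝ), IsWeakStarOpen W ∧ U = W ∩ Γ) →
    ∃ V ⊆ U, V.Nonempty ∧ ∃ y₁ ∈ V, ∃ e : Y, ‖e‖ = 1 ∧ ∃ F : Y →L[ℝ] Y,
      ‖F e‖ = 1 ∧ ‖F‖ = 1 ∧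
      y₁ (F e) = 1 ∧
      y₁.comp F = y₁ ∧
      (∀ φ ∈ Γ, φ ∉ {ψ ∈ Γ | ‖ψ.comp F‖ + (1 - ε) * ‖ψ - ψ.comp F‖ ≤ 1} →
        |φ (F e)| ≤ ρ) ∧
      (∀ φ ∈ Γ, ∃ (n : ℕ) (v : Fin n → (Y →L[ℝ] ℝ)) (c : Fin n → ℝ),
        (∀ k, v k ∈ V) ∧ (∑ k, |c k|) ≤ 1 ∧
        ‖φ.comp F - ∑ k, c k • v k‖ < ε) ∧
      (∀ φ ∈ V, |φ e - 1| ≤ ε)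

/-- `Y` has ACK structure with parameter `ρ`. -/
def HasACK (Y : Type*) [NormedAddCommGroup Y] [NormedSpace ℝ Y] (ρ : ℝ) : Prop :=
  ∃ Γ : Set (Y →L[ℝ] ℝ), ACKWith Y ρ Γ

/-- `T : M → Y` is a `Γ`-flat map. -/
def IsGammaFlat {M Y : Type*} [MetricSpace M] [NormedAddCommGroup Y] [NormedSpace ℝ Y]
    (Γ : Set (Y →L[ℝ] ℝ)) (T : M → Y) : Prop :=
  ∀ U : Set (Y →L[ℝ] ℝ), IsWeakStarOpen U → (U ∩ Γ).Nonempty → ∀ δ > (0 : ℝ),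
    ∃ V : Set (Y →L[ℝ] ℝ), IsWeakStarOpen V ∧ V ⊆ U ∧ (V ∩ Γ).Nonempty ∧
      ∀ φ ∈ V ∩ Γ, ∀ ψ ∈ V ∩ Γ, lipNorm (fun x => φ (T x) - ψ (T x)) < δ

section Aux

variable {M Y : Type*} [MetricSpace M] [NormedAddCommGroup Y]

private lemma lipNorm_le' {F : M → Y} {K : ℝ} (hK : 0 ≤ K)
    (h : ∀ p q : M, ‖F p - F q‖ ≤ K * dist p q) : lipNorm F ≤ K := by
  apply Real.sSup_le _ hK
  rintro x ⟨p, q, hpq, rfl⟩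
  rw [div_le_iff₀ (dist_pos.mpr hpq)]
  exact h p q

private lemma lipNorm_bddAbove {F : M → Y} {K : ℝ}
    (h : ∀ p q : M, ‖F p - F q‖ ≤ K * dist p q) :
    BddAbove {r : ℝ | ∃ p q : M, p ≠ q ∧ r = ‖F p - F q‖ / dist p q} := by
  refine ⟨max K 0, ?_⟩
  rintro x ⟨p, q, hpq, rfl⟩
  have hd := dist_pos.mpr hpq
  rw [div_le_iff₀ hd]
  calc ‖F p - F q‖ ≤ K * dist p q := h p q
  _ ≤ max K 0 * dist p q := mul_le_mul_of_nonneg_right (le_max_left _ _) hd.le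

private lemma norm_sub_le_lipNorm_mul {F : M → Y} {K : ℝ}
    (h : ∀ p q : M, ‖F p - F q‖ ≤ K * dist p q) (p q : M) :
    ‖F p - F q‖ ≤ lipNorm F * dist p q := by
  rcases eq_or_ne p q with rfl | hpq
  · simp
  · have hd := dist_pos.mpr hpq
    have h1 : ‖F p - F q‖ / dist p q ≤ lipNorm F :=
      le_csSup (lipNorm_bddAbove h) ⟨p, q, hpq, rfl⟩
    calc ‖F p - F q‖ = ‖F p - F q‖ / dist p q * dist p q := by field_simp
    _ ≤ lipNorm F * dist p q := mul_le_mul_of_nonneg_right h1 hd.le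

private lemma exists_gt_of_lt_sSup {S : Set ℝ} {b : ℝ} (hb : 0 ≤ b) (h : b < sSup S) :
    ∃ x ∈ S, b < x := by
  by_contra hc
  push_neg at hc
  exact absurd (Real.sSup_le hc hb) (not_le.mpr h)

private lemma exists_pair_of_lt_lipNorm {F : M → Y} {b : ℝ} (hb : 0 ≤ b)
    (h : b < lipNorm F) : ∃ p q : M, p ≠ q ∧ b * dist p q < ‖F p - F q‖ := by
  obtain ⟨x, hxS, hx⟩ := exists_gt_of_lt_sSup hb h
  obtain ⟨p, q, hpq, rfl⟩ := hxS
  refine ⟨p, q, hpq, ?_⟩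
  rwa [lt_div_iff₀ (dist_pos.mpr hpq)] at hx

end Aux


set_option maxHeartbeats 2000000 in
theorem gammaFlat_mem_closure_SA {M Y : Type*} [MetricSpace M] [CompleteSpace M]
    [NormedAddCommGroup Y] [NormedSpace ℝ Y] [CompleteSpace Y]
    (z : M) (hM : SADense M z ℝ)
    (ρ : ℝ) (hρ0 : 0 ≤ ρ) (hρ1 : ρ < 1)
    (Γ : Set (Y →L[ℝ] ℝ)) (hY : ACKWith Y ρ Γ) :
    ∀ T : M → Y, IsLip0 z T → IsGammaFlat Γ T → ∀ ε > (0 : ℝ),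
      ∃ G : M → Y, IsLip0 z G ∧ StronglyAttains G ∧
        lipNorm (fun x => G x - T x) < ε := by
  classical
  obtain ⟨⟨hΓ1, hΓsup⟩, hACK⟩ := hY
  intro T hT0 hflat ε hε
  obtain ⟨⟨KT, hKT⟩, hTz⟩ := hT0
  have hTb : ∀ p q : M, ‖T p - T q‖ ≤ (KT : ℝ) * dist p q := fun p q => by
    rw [← dist_eq_norm]; exact hKT.dist_le_mul p q
  -- M has two distinct points
  obtain ⟨G₀, _, ⟨p₁, q₁, hp₁q₁, _⟩, _⟩ :=
    hM (fun _ => (0 : ℝ)) ⟨⟨0, LipschitzWith.const' 0⟩, rfl⟩ 1 one_pos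
  have hTR : ∀ p q : M, ‖T p - T q‖ ≤ lipNorm T * dist p q := norm_sub_le_lipNorm_mul hTb
  have hR0 : 0 ≤ lipNorm T := by
    have h1 : ‖T p₁ - T q₁‖ / dist p₁ q₁ ≤ lipNorm T :=
      le_csSup (lipNorm_bddAbove hTb) ⟨p₁, q₁, hp₁q₁, rfl⟩
    exact le_trans (by positivity) h1
  rcases eq_or_lt_of_le hR0 with hR | hR
  · -- degenerate case : T = 0
    have hT0' : ∀ x : M, T x = 0 := by
      intro x
      rcases eq_or_ne x z with rfl | hxz
      · exact hTz
      · have h2 := hTR x z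
        rw [← hR, zero_mul] at h2
        have h3 : T x - T z = 0 := by
          rw [← norm_le_zero_iff]; exact h2
        rw [hTz, sub_zero] at h3
        exact h3
    have hzb : ∀ p q : M, ‖(fun _ : M => (0 : Y)) p - (fun _ : M => (0 : Y)) q‖ ≤ 0 * dist p q := by
      intro p q; simp
    have hzero_lip : lipNorm (fun _ : M => (0 : Y)) = 0 := by
      refine le_antisymm (lipNorm_le' le_rfl hzb) ?_
      refine le_csSup (lipNorm_bddAbove hzb) ⟨p₁, q₁, hp₁q₁, by simp⟩
    refine ⟨fun _ => 0, ⟨⟨0, LipschitzWith.const' 0⟩, rfl⟩,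
      ⟨p₁, q₁, hp₁q₁, by rw [hzero_lip]; simp⟩, ?_⟩
    have hb : ∀ p q : M, ‖((0 : Y) - T p) - ((0 : Y) - T q)‖ ≤ 0 * dist p q := by
      intro p q; rw [hT0' p, hT0' q]; simp
    calc lipNorm (fun x : M => (0 : Y) - T x) ≤ 0 := lipNorm_le' le_rfl hb
    _ < ε := hε
  · -- main case
    obtain ⟨R, hRdef⟩ : ∃ r : ℝ, r = lipNorm T := ⟨_, rfl⟩
    rw [← hRdef] at hTR hR0 hR
    have hρ' : 0 < 1 - ρ := by linarith
    have hR1 : (0:ℝ) < 64 * (R + 1) := by linarith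
    obtain ⟨δ, hδ0, hδ1, hδε⟩ :
        ∃ δ : ℝ, 0 < δ ∧ δ ≤ (1 - ρ) / 16 ∧ δ ≤ ε * (1 - ρ) / (64 * (R + 1)) :=
      ⟨min (ε * (1 - ρ) / (64 * (R + 1))) ((1 - ρ) / 16),
        lt_min (by positivity) (by positivity), min_le_right _ _, min_le_left _ _⟩
    have hδ16 : δ ≤ 1 / 16 := le_trans hδ1 (by linarith)
    obtain ⟨c, hc0, hcρ⟩ : ∃ c : ℝ, 0 < c ∧ c * (1 - ρ) = 11 * δ :=
      ⟨11 * δ / (1 - ρ), by positivity, div_mul_cancel₀ _ (ne_of_gt hρ')⟩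
    have hc1 : c ≤ 1 := by nlinarith [hcρ, hδ1, hρ']
    have hc11 : 11 * δ ≤ c := by nlinarith [hcρ, hρ0, hc0.le]
    -- a pair where T almost attains
    obtain ⟨p₀, q₀, hp₀q₀, hpair⟩ : ∃ p q : M, p ≠ q ∧ (1 - δ) * R * dist p q < ‖T p - T q‖ := by
      obtain ⟨p, q, hpq, h⟩ := exists_pair_of_lt_lipNorm (F := T) (b := (1 - δ) * R)
        (mul_nonneg (by linarith) hR.le)
        (by rw [← hRdef]; nlinarith [mul_pos hδ0 hR])
      exact ⟨p, q, hpq, h⟩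
    have hd₀ : 0 < dist p₀ q₀ := dist_pos.mpr hp₀q₀
    -- a functional in Γ witnessing it
    obtain ⟨φ₀, hφ₀Γ, hφ₀⟩ : ∃ φ₀ ∈ Γ, (1 - δ) * R * dist p₀ q₀ < |φ₀ (T p₀ - T q₀)| := by
      have h1 : (1 - δ) * R * dist p₀ q₀ < ‖T p₀ - T q₀‖ := hpair
      rw [hΓsup (T p₀ - T q₀)] at h1
      obtain ⟨x, hxS, hx⟩ := exists_gt_of_lt_sSup
        (mul_nonneg (mul_nonneg (by linarith) hR.le) hd₀.le) h1
      obtain ⟨φ₀, hφ₀Γ, rfl⟩ := hxS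
      exact ⟨φ₀, hφ₀Γ, hx⟩
    -- the weak-star open set U₀
    obtain ⟨U₀, hU₀def⟩ : ∃ U : Set (Y →L[ℝ] ℝ),
        U = {ψ | (1 - δ) * R * dist p₀ q₀ < |ψ (T p₀ - T q₀)|} := ⟨_, rfl⟩
    have hU₀open : IsWeakStarOpen U₀ := by
      rw [hU₀def]
      show IsOpen (X := WeakDual ℝ Y) (StrongDual.toWeakDual ''
        {ψ : Y →L[ℝ] ℝ | (1 - δ) * R * dist p₀ q₀ < |ψ (T p₀ - T q₀)|})
      have himg : StrongDual.toWeakDual ''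
          {ψ : Y →L[ℝ] ℝ | (1 - δ) * R * dist p₀ q₀ < |ψ (T p₀ - T q₀)|} =
          {x : WeakDual ℝ Y | (1 - δ) * R * dist p₀ q₀ < |x (T p₀ - T q₀)|} := by
        ext x
        constructor
        · rintro ⟨ψ, hψ, rfl⟩; exact hψ
        · intro hx
          exact ⟨StrongDual.toWeakDual.symm x, hx, by simp⟩
      rw [himg]
      exact isOpen_lt continuous_const ((WeakDual.eval_continuous (T p₀ - T q₀)).abs)
    -- flatness
    obtain ⟨Vw, hVwopen, hVwsub, hVwne, hdiam⟩ :=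
      hflat U₀ hU₀open ⟨φ₀, by rw [hU₀def]; exact hφ₀, hφ₀Γ⟩ (δ * R) (mul_pos hδ0 hR)
    -- ACK structure
    obtain ⟨V, hVsub, hVne, y₁, hy₁V, e, he, F, hFe1, hFn, hy₁Fe, hy₁F, hρA, hhull, hevals⟩ :=
      hACK δ hδ0 (Vw ∩ Γ) hVwne inter_subset_right ⟨Vw, hVwopen, rfl⟩
    have hy₁VwΓ : y₁ ∈ Vw ∩ Γ := hVsub hy₁V
    have hy₁Γ : y₁ ∈ Γ := hy₁VwΓ.2
    have hy₁U₀ : (1 - δ) * R * dist p₀ q₀ < |y₁ (T p₀ - T q₀)| := by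
      have h1 := hVwsub hy₁VwΓ.1
      rw [hU₀def] at h1
      exact h1
    have hy₁n : ‖y₁‖ ≤ 1 := hΓ1 y₁ hy₁Γ
    -- the scalar function f
    obtain ⟨f, hfdef⟩ : ∃ f' : M → ℝ, f' = fun x => y₁ (T x) := ⟨_, rfl⟩
    have hfb : ∀ p q : M, ‖f p - f q‖ ≤ (KT : ℝ) * dist p q := by
      intro p q
      calc ‖f p - f q‖ = ‖y₁ (T p - T q)‖ := by rw [hfdef]; simp [map_sub]
      _ ≤ ‖y₁‖ * ‖T p - T q‖ := y₁.le_opNorm _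
      _ ≤ 1 * ((KT : ℝ) * dist p q) :=
          mul_le_mul hy₁n (hTb p q) (norm_nonneg _) zero_le_one
      _ = (KT : ℝ) * dist p q := one_mul _
    have hfR : ∀ p q : M, ‖f p - f q‖ ≤ R * dist p q := by
      intro p q
      calc ‖f p - f q‖ = ‖y₁ (T p - T q)‖ := by rw [hfdef]; simp [map_sub]
      _ ≤ ‖y₁‖ * ‖T p - T q‖ := y₁.le_opNorm _
      _ ≤ 1 * (R * dist p q) := by
          apply mul_le_mul hy₁n (hTR p q) (norm_nonneg _) zero_le_one
      _ = R * dist p q := one_mul _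
    have hfLip0 : IsLip0 z f := by
      refine ⟨⟨KT, LipschitzWith.of_dist_le_mul fun p q => ?_⟩, by simp [hfdef, hTz]⟩
      rw [dist_eq_norm]
      exact hfb p q
    -- the strongly attaining scalar function g
    obtain ⟨g, hg0, ⟨r', s', hrs, hgatt⟩, hgf⟩ := hM f hfLip0 (δ * R) (mul_pos hδ0 hR)
    obtain ⟨⟨Kg, hKg⟩, hgz⟩ := hg0
    have hgb : ∀ p q : M, ‖g p - g q‖ ≤ (Kg : ℝ) * dist p q := fun p q => by
      rw [← dist_eq_norm]; exact hKg.dist_le_mul p q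
    have hgR : ∀ p q : M, ‖g p - g q‖ ≤ lipNorm g * dist p q := norm_sub_le_lipNorm_mul hgb
    have hgfb : ∀ p q : M, ‖(g p - f p) - (g q - f q)‖ ≤ ((Kg : ℝ) + KT) * dist p q := by
      intro p q
      have h1 : (g p - f p) - (g q - f q) = (g p - g q) - (f p - f q) := by ring
      rw [h1]
      calc ‖(g p - g q) - (f p - f q)‖ ≤ ‖g p - g q‖ + ‖f p - f q‖ := norm_sub_le _ _
      _ ≤ (Kg : ℝ) * dist p q + (KT : ℝ) * dist p q := add_le_add (hgb p q) (hfb p q)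
      _ = ((Kg : ℝ) + KT) * dist p q := by ring
    have hgfd : ∀ p q : M, ‖(g p - f p) - (g q - f q)‖ ≤ (δ * R) * dist p q := by
      intro p q
      have h1 := norm_sub_le_lipNorm_mul (F := fun x => g x - f x) hgfb p q
      calc ‖(g p - f p) - (g q - f q)‖ ≤ lipNorm (fun x => g x - f x) * dist p q := h1
      _ ≤ (δ * R) * dist p q := mul_le_mul_of_nonneg_right hgf.le dist_nonneg
    have hfp₀ : (1 - δ) * R * dist p₀ q₀ < ‖f p₀ - f q₀‖ := by
      have h1 : f p₀ - f q₀ = y₁ (T p₀ - T q₀) := by rw [hfdef]; simp [map_sub]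
      rw [h1, Real.norm_eq_abs]
      exact hy₁U₀
    have hLgLB : (1 - 2 * δ) * R ≤ lipNorm g := by
      have h2 : (1 - 2 * δ) * R * dist p₀ q₀ ≤ ‖g p₀ - g q₀‖ := by
        have h3 := hgfd p₀ q₀
        have h4 : ‖f p₀ - f q₀‖ ≤ ‖g p₀ - g q₀‖ + ‖(g p₀ - f p₀) - (g q₀ - f q₀)‖ := by
          have heq : f p₀ - f q₀ = (g p₀ - g q₀) - ((g p₀ - f p₀) - (g q₀ - f q₀)) := by ring
          rw [heq]; exact norm_sub_le _ _
        linarith [hfp₀, h3, h4]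
      have h5 : (1 - 2 * δ) * R ≤ ‖g p₀ - g q₀‖ / dist p₀ q₀ := by
        rw [le_div_iff₀ hd₀]; exact h2
      exact le_trans h5 (le_csSup (lipNorm_bddAbove hgb) ⟨p₀, q₀, hp₀q₀, rfl⟩)
    have hLg0 : 0 ≤ lipNorm g :=
      le_trans (mul_nonneg (by linarith [hδ16] : (0:ℝ) ≤ 1 - 2 * δ) hR.le) hLgLB
    have hL0 : 0 ≤ (1 + c) * lipNorm g := mul_nonneg (by linarith) hLg0
    have hδc : δ * c ≤ δ * 1 := mul_le_mul_of_nonneg_left hc1 hδ0.le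
    have hδδ : (0:ℝ) ≤ δ * δ := mul_nonneg hδ0.le hδ0.le
    have hδδc : (0:ℝ) ≤ δ * δ * c := mul_nonneg hδδ hc0.le
    have hRL : R ≤ (1 - δ) * ((1 + c) * lipNorm g) := by
      have hkey : (1 : ℝ) ≤ (1 - δ) * (1 + c) * (1 - 2 * δ) := by
        have hexp : (1 - δ) * (1 + c) * (1 - 2 * δ) - 1
            = (c - 3 * δ) - 3 * (δ * c) + 2 * (δ * δ) + 2 * (δ * δ * c) := by ring
        linarith [hexp, hc11, hδc, hδδ, hδδc, hδ0.le]
      have hfac : (0 : ℝ) ≤ (1 - δ) * (1 + c) :=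
        mul_nonneg (by linarith) (by linarith)
      have h6 : (1 - δ) * (1 + c) * ((1 - 2 * δ) * R) ≤ (1 - δ) * (1 + c) * lipNorm g :=
        mul_le_mul_of_nonneg_left hLgLB hfac
      have h7 := mul_le_mul_of_nonneg_right hkey hR0
      have hexp2 : (1 - δ) * (1 + c) * (1 - 2 * δ) * R
          = (1 - δ) * (1 + c) * ((1 - 2 * δ) * R) := by ring
      linarith [h7, h6, hexp2]
    -- the map G
    obtain ⟨G, hGdef⟩ : ∃ G' : M → Y,
        G' = fun x => T x - F (T x) + ((1 + c) * g x) • F e := ⟨_, rfl⟩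
    have hy₁F' : ∀ y : Y, y₁ (F y) = y₁ y := fun y => DFunLike.congr_fun hy₁F y
    have hy₁G : ∀ x : M, y₁ (G x) = (1 + c) * g x := by
      intro x
      rw [hGdef]
      simp only [map_add, map_sub, _root_.map_smul, smul_eq_mul]
      rw [hy₁F' (T x), hy₁Fe]
      ring
    -- the key hull estimate
    have hD : ∀ φ ∈ Γ, ∀ p q : M,
        ‖(φ (F (T p)) - φ (F (T q))) - (f p - f q) * φ (F e)‖ ≤ 4 * δ * R * dist p q := by
      intro φ hφ p q
      obtain ⟨n, v, cf, hvV, hcsum, hhn⟩ := hhull φ hφ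
      obtain ⟨herr, herrdef⟩ : ∃ h' : Y →L[ℝ] ℝ,
          h' = φ.comp F - ∑ k, cf k • v k := ⟨_, rfl⟩
      have hherr : ‖herr‖ ≤ δ := by rw [herrdef]; exact hhn.le
      have happ : ∀ y : Y, φ (F y) = (∑ k, cf k * (v k) y) + herr y := by
        intro y
        rw [herrdef]
        simp only [ContinuousLinearMap.sub_apply, ContinuousLinearMap.coe_sum',
          Finset.sum_apply, ContinuousLinearMap.smul_apply, smul_eq_mul,
          ContinuousLinearMap.comp_apply]
        ring
      have hvV' : ∀ k, v k ∈ Vw ∩ Γ := fun k => hVsub (hvV k)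
      have hvkT : ∀ k, ‖(v k (T p) - y₁ (T p)) - (v k (T q) - y₁ (T q))‖ ≤ δ * R * dist p q := by
        intro k
        have hlt := hdiam (v k) (hvV' k) y₁ hy₁VwΓ
        have hbk : ∀ p q : M,
            ‖(v k (T p) - y₁ (T p)) - (v k (T q) - y₁ (T q))‖ ≤ (2 * KT : ℝ) * dist p q := by
          intro p q
          have h1 : (v k (T p) - y₁ (T p)) - (v k (T q) - y₁ (T q))
              = v k (T p - T q) - y₁ (T p - T q) := by simp [map_sub]; ring
          rw [h1]
          calc ‖v k (T p - T q) - y₁ (T p - T q)‖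
              ≤ ‖v k (T p - T q)‖ + ‖y₁ (T p - T q)‖ := norm_sub_le _ _
          _ ≤ ‖v k‖ * ‖T p - T q‖ + ‖y₁‖ * ‖T p - T q‖ :=
              add_le_add ((v k).le_opNorm _) (y₁.le_opNorm _)
          _ ≤ 1 * ((KT : ℝ) * dist p q) + 1 * ((KT : ℝ) * dist p q) := by
              apply add_le_add
              · exact mul_le_mul (hΓ1 (v k) (hvV' k).2) (hTb p q) (norm_nonneg _) zero_le_one
              · exact mul_le_mul hy₁n (hTb p q) (norm_nonneg _) zero_le_one
          _ = (2 * KT : ℝ) * dist p q := by ring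
        have h2 := norm_sub_le_lipNorm_mul (F := fun x => v k (T x) - y₁ (T x)) hbk p q
        calc ‖(v k (T p) - y₁ (T p)) - (v k (T q) - y₁ (T q))‖
            ≤ lipNorm (fun x => v k (T x) - y₁ (T x)) * dist p q := h2
        _ ≤ δ * R * dist p q := mul_le_mul_of_nonneg_right hlt.le dist_nonneg
      have hE1 : ‖(φ (F (T p)) - φ (F (T q))) - (∑ k, cf k) * (f p - f q)‖
          ≤ 2 * δ * R * dist p q := by
        have hw : φ (F (T p)) - φ (F (T q)) = φ (F (T p - T q)) := by simp [map_sub]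
        have hfw : f p - f q = y₁ (T p - T q) := by rw [hfdef]; simp [map_sub]
        rw [hw, hfw, happ (T p - T q)]
        have hrw : (∑ k, cf k * (v k) (T p - T q)) + herr (T p - T q)
            - (∑ k, cf k) * y₁ (T p - T q)
            = (∑ k, cf k * ((v k) (T p - T q) - y₁ (T p - T q))) + herr (T p - T q) := by
          rw [Finset.sum_mul]
          rw [show ∀ A B C : ℝ, A + C - B = (A - B) + C from fun A B C => by ring]
          rw [← Finset.sum_sub_distrib]
          congr 1
          exact Finset.sum_congr rfl fun k _ => (mul_sub _ _ _).symm
        rw [hrw]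
        have hsum : ‖∑ k, cf k * ((v k) (T p - T q) - y₁ (T p - T q))‖
            ≤ δ * R * dist p q := by
          calc ‖∑ k, cf k * ((v k) (T p - T q) - y₁ (T p - T q))‖
              ≤ ∑ k, ‖cf k * ((v k) (T p - T q) - y₁ (T p - T q))‖ := norm_sum_le _ _
          _ ≤ ∑ k, |cf k| * (δ * R * dist p q) := by
              apply Finset.sum_le_sum
              intro k _
              rw [norm_mul, Real.norm_eq_abs]
              apply mul_le_mul_of_nonneg_left _ (abs_nonneg _)
              have h1 : (v k) (T p - T q) - y₁ (T p - T q)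
                  = (v k (T p) - y₁ (T p)) - (v k (T q) - y₁ (T q)) := by
                simp [map_sub]; ring
              rw [h1]; exact hvkT k
          _ = (∑ k, |cf k|) * (δ * R * dist p q) := by rw [← Finset.sum_mul]
          _ ≤ 1 * (δ * R * dist p q) :=
              mul_le_mul_of_nonneg_right hcsum
                (mul_nonneg (mul_nonneg hδ0.le hR.le) dist_nonneg)
          _ = δ * R * dist p q := one_mul _
        have hhw : ‖herr (T p - T q)‖ ≤ δ * (R * dist p q) := by
          calc ‖herr (T p - T q)‖ ≤ ‖herr‖ * ‖T p - T q‖ := herr.le_opNorm _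
          _ ≤ δ * (R * dist p q) := mul_le_mul hherr (hTR p q) (norm_nonneg _) hδ0.le
        calc ‖(∑ k, cf k * ((v k) (T p - T q) - y₁ (T p - T q))) + herr (T p - T q)‖
            ≤ ‖∑ k, cf k * ((v k) (T p - T q) - y₁ (T p - T q))‖ + ‖herr (T p - T q)‖ :=
            norm_add_le _ _
        _ ≤ δ * R * dist p q + δ * (R * dist p q) := add_le_add hsum hhw
        _ = 2 * δ * R * dist p q := by ring
      have hE2 : ‖φ (F e) - ∑ k, cf k‖ ≤ 2 * δ := by
        rw [happ e]
        have hrw : (∑ k, cf k * (v k) e) + herr e - ∑ k, cf k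
            = (∑ k, cf k * ((v k) e - 1)) + herr e := by
          rw [show ∀ A B C : ℝ, A + C - B = (A - B) + C from fun A B C => by ring]
          rw [← Finset.sum_sub_distrib]
          congr 1
          exact Finset.sum_congr rfl fun k _ => by ring
        rw [hrw]
        have hsum : ‖∑ k, cf k * ((v k) e - 1)‖ ≤ δ := by
          calc ‖∑ k, cf k * ((v k) e - 1)‖ ≤ ∑ k, ‖cf k * ((v k) e - 1)‖ := norm_sum_le _ _
          _ ≤ ∑ k, |cf k| * δ := by
              apply Finset.sum_le_sum
              intro k _
              rw [norm_mul, Real.norm_eq_abs]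
              apply mul_le_mul_of_nonneg_left _ (abs_nonneg _)
              rw [Real.norm_eq_abs]
              exact hevals (v k) (hvV k)
          _ = (∑ k, |cf k|) * δ := by rw [← Finset.sum_mul]
          _ ≤ 1 * δ := mul_le_mul_of_nonneg_right hcsum hδ0.le
          _ = δ := one_mul _
        have hhe : ‖herr e‖ ≤ δ := by
          calc ‖herr e‖ ≤ ‖herr‖ * ‖e‖ := herr.le_opNorm _
          _ = ‖herr‖ := by rw [he, mul_one]
          _ ≤ δ := hherr
        calc ‖(∑ k, cf k * ((v k) e - 1)) + herr e‖
            ≤ ‖∑ k, cf k * ((v k) e - 1)‖ + ‖herr e‖ := norm_add_le _ _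
        _ ≤ δ + δ := add_le_add hsum hhe
        _ = 2 * δ := by ring
      -- combine
      have hsplit : (φ (F (T p)) - φ (F (T q))) - (f p - f q) * φ (F e)
          = ((φ (F (T p)) - φ (F (T q))) - (∑ k, cf k) * (f p - f q))
            + ((∑ k, cf k) - φ (F e)) * (f p - f q) := by ring
      rw [hsplit]
      have h7 : ‖((∑ k, cf k) - φ (F e)) * (f p - f q)‖ ≤ 2 * δ * (R * dist p q) := by
        rw [norm_mul]
        apply mul_le_mul _ (hfR p q) (norm_nonneg _) (by linarith)
        rw [norm_sub_rev]
        exact hE2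
      calc ‖((φ (F (T p)) - φ (F (T q))) - (∑ k, cf k) * (f p - f q))
            + ((∑ k, cf k) - φ (F e)) * (f p - f q)‖
          ≤ ‖(φ (F (T p)) - φ (F (T q))) - (∑ k, cf k) * (f p - f q)‖
            + ‖((∑ k, cf k) - φ (F e)) * (f p - f q)‖ := norm_add_le _ _
      _ ≤ 2 * δ * R * dist p q + 2 * δ * (R * dist p q) := add_le_add hE1 h7
      _ = 4 * δ * R * dist p q := by ring
    -- the norm bound for G
    have hGφ : ∀ φ ∈ Γ, ∀ p q : M,
        ‖φ (G p - G q)‖ ≤ ((1 + c) * lipNorm g) * dist p q := by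
      intro φ hφ p q
      have hGx : ∀ x : M, φ (G x) = φ (T x) - φ (F (T x)) + ((1 + c) * g x) * φ (F e) := by
        intro x
        rw [hGdef]
        simp only [map_add, map_sub, _root_.map_smul, smul_eq_mul]
      have hmapsub : φ (G p - G q) = φ (G p) - φ (G q) := map_sub φ _ _
      by_cases hmem : ‖φ.comp F‖ + (1 - δ) * ‖φ - φ.comp F‖ ≤ 1
      · -- φ ∈ V₁ : exact estimate
        have hB : φ (G p) - φ (G q)
            = (φ - φ.comp F) (T p - T q) + ((1 + c) * (g p - g q)) * φ (F e) := by
          rw [hGx p, hGx q]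
          simp only [ContinuousLinearMap.sub_apply, ContinuousLinearMap.comp_apply, map_sub]
          ring
        rw [hmapsub, hB]
        have b1 : ‖(φ - φ.comp F) (T p - T q)‖ ≤ ‖φ - φ.comp F‖ * (R * dist p q) := by
          calc ‖(φ - φ.comp F) (T p - T q)‖ ≤ ‖φ - φ.comp F‖ * ‖T p - T q‖ :=
              (φ - φ.comp F).le_opNorm _
          _ ≤ ‖φ - φ.comp F‖ * (R * dist p q) :=
              mul_le_mul_of_nonneg_left (hTR p q) (norm_nonneg _)
        have b2 : ‖((1 + c) * (g p - g q)) * φ (F e)‖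
            ≤ ((1 + c) * (lipNorm g * dist p q)) * ‖φ.comp F‖ := by
          rw [norm_mul, norm_mul]
          have hb2a : ‖(1 + c : ℝ)‖ = 1 + c := by
            rw [Real.norm_eq_abs, abs_of_pos (by linarith)]
          have hb2b : ‖φ (F e)‖ ≤ ‖φ.comp F‖ := by
            have h1 : φ (F e) = (φ.comp F) e := rfl
            rw [h1]
            calc ‖(φ.comp F) e‖ ≤ ‖φ.comp F‖ * ‖e‖ := (φ.comp F).le_opNorm _
            _ = ‖φ.comp F‖ := by rw [he, mul_one]
          rw [hb2a]
          apply mul_le_mul _ hb2b (norm_nonneg _)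
            (mul_nonneg (by linarith) (mul_nonneg hLg0 dist_nonneg))
          exact mul_le_mul_of_nonneg_left (hgR p q) (by linarith)
        have k1 : ‖φ - φ.comp F‖ * (R * dist p q)
            ≤ ‖φ - φ.comp F‖ * ((1 - δ) * ((1 + c) * lipNorm g) * dist p q) := by
          apply mul_le_mul_of_nonneg_left _ (norm_nonneg _)
          exact mul_le_mul_of_nonneg_right hRL dist_nonneg
        have k2 : (‖φ.comp F‖ + (1 - δ) * ‖φ - φ.comp F‖) * (((1 + c) * lipNorm g) * dist p q)
            ≤ 1 * (((1 + c) * lipNorm g) * dist p q) :=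
          mul_le_mul_of_nonneg_right hmem (mul_nonneg hL0 dist_nonneg)
        calc ‖(φ - φ.comp F) (T p - T q) + ((1 + c) * (g p - g q)) * φ (F e)‖
            ≤ ‖(φ - φ.comp F) (T p - T q)‖ + ‖((1 + c) * (g p - g q)) * φ (F e)‖ :=
            norm_add_le _ _
        _ ≤ ((1 + c) * lipNorm g) * dist p q := by
            have he1 : ‖φ - φ.comp F‖ * ((1 - δ) * ((1 + c) * lipNorm g) * dist p q)
                = (1 - δ) * ‖φ - φ.comp F‖ * (((1 + c) * lipNorm g) * dist p q) := by ring
            have he2 : ((1 + c) * (lipNorm g * dist p q)) * ‖φ.comp F‖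
                = ‖φ.comp F‖ * (((1 + c) * lipNorm g) * dist p q) := by ring
            linarith [b1, b2, k1, k2, he1, he2]
      · -- φ ∉ V₁ : use |φ (F e)| ≤ ρ
        have htρ : ‖φ (F e)‖ ≤ ρ := by
          rw [Real.norm_eq_abs]
          exact hρA φ hφ (fun hmem' => hmem hmem'.2)
        have hA : φ (G p) - φ (G q)
            = (φ (T p) - φ (T q))
              - ((φ (F (T p)) - φ (F (T q))) - (f p - f q) * φ (F e))
              + ((1 + c) * (g p - g q) - (f p - f q)) * φ (F e) := by
          rw [hGx p, hGx q]; ring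
        rw [hmapsub, hA]
        have b1 : ‖φ (T p) - φ (T q)‖ ≤ R * dist p q := by
          calc ‖φ (T p) - φ (T q)‖ = ‖φ (T p - T q)‖ := by rw [map_sub]
          _ ≤ ‖φ‖ * ‖T p - T q‖ := φ.le_opNorm _
          _ ≤ 1 * (R * dist p q) :=
              mul_le_mul (hΓ1 φ hφ) (hTR p q) (norm_nonneg _) zero_le_one
          _ = R * dist p q := one_mul _
        have b2 := hD φ hφ p q
        have b3 : ‖(1 + c) * (g p - g q) - (f p - f q)‖ ≤ (2 * δ + c) * R * dist p q := by
          have hid : (1 + c) * (g p - g q) - (f p - f q)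
              = (1 + c) * ((g p - f p) - (g q - f q)) + c * (f p - f q) := by ring
          rw [hid]
          calc ‖(1 + c) * ((g p - f p) - (g q - f q)) + c * (f p - f q)‖
              ≤ ‖(1 + c) * ((g p - f p) - (g q - f q))‖ + ‖c * (f p - f q)‖ := norm_add_le _ _
          _ ≤ (1 + c) * ((δ * R) * dist p q) + c * (R * dist p q) := by
              apply add_le_add
              · rw [norm_mul, Real.norm_eq_abs, abs_of_pos (by linarith : (0:ℝ) < 1 + c)]
                exact mul_le_mul_of_nonneg_left (hgfd p q) (by linarith)
              · rw [norm_mul, Real.norm_eq_abs, abs_of_pos hc0]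
                exact mul_le_mul_of_nonneg_left (hfR p q) hc0.le
          _ ≤ (2 * δ + c) * R * dist p q := by
            have hcd : c * (δ * R * dist p q) ≤ 1 * (δ * R * dist p q) :=
              mul_le_mul_of_nonneg_right hc1
                (mul_nonneg (mul_nonneg hδ0.le hR.le) dist_nonneg)
            linarith [hcd]
        have b4 : ‖((1 + c) * (g p - g q) - (f p - f q)) * φ (F e)‖
            ≤ ((2 * δ + c) * R * dist p q) * ρ := by
          rw [norm_mul]
          exact mul_le_mul b3 htρ (norm_nonneg _)
            (mul_nonneg (mul_nonneg (by linarith) hR.le) dist_nonneg)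
        have hρδ : ρ * δ ≤ 1 * δ := mul_le_mul_of_nonneg_right hρ1.le hδ0.le
        have hN3 : 1 + 4 * δ + ρ * (2 * δ + c) ≤ (1 + c) * (1 - 2 * δ) := by
          have hexp3 : (1 + c) * (1 - 2 * δ) - (1 + 4 * δ + ρ * (2 * δ + c))
              = (c - c * ρ) - 6 * δ - 2 * (ρ * δ) - 2 * (δ * c) := by ring
          linarith [hexp3, hδc, hρδ, hcρ, hδ0.le]
        have hchain : (1 + 4 * δ + ρ * (2 * δ + c)) * (R * dist p q)
            ≤ ((1 + c) * lipNorm g) * dist p q := by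
          have h8 : (1 + 4 * δ + ρ * (2 * δ + c)) * (R * dist p q)
              ≤ ((1 + c) * (1 - 2 * δ)) * (R * dist p q) :=
            mul_le_mul_of_nonneg_right hN3 (mul_nonneg hR.le dist_nonneg)
          have h9 : ((1 + c) * ((1 - 2 * δ) * R)) * dist p q
              ≤ ((1 + c) * lipNorm g) * dist p q := by
            apply mul_le_mul_of_nonneg_right _ dist_nonneg
            exact mul_le_mul_of_nonneg_left hLgLB (by linarith)
          have hexp4 : ((1 + c) * (1 - 2 * δ)) * (R * dist p q)
              = ((1 + c) * ((1 - 2 * δ) * R)) * dist p q := by ring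
          linarith [h8, h9, hexp4]
        calc ‖(φ (T p) - φ (T q))
              - ((φ (F (T p)) - φ (F (T q))) - (f p - f q) * φ (F e))
              + ((1 + c) * (g p - g q) - (f p - f q)) * φ (F e)‖
            ≤ ‖(φ (T p) - φ (T q))
              - ((φ (F (T p)) - φ (F (T q))) - (f p - f q) * φ (F e))‖
              + ‖((1 + c) * (g p - g q) - (f p - f q)) * φ (F e)‖ := norm_add_le _ _
        _ ≤ (‖φ (T p) - φ (T q)‖
              + ‖(φ (F (T p)) - φ (F (T q))) - (f p - f q) * φ (F e)‖)
              + ‖((1 + c) * (g p - g q) - (f p - f q)) * φ (F e)‖ := by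
            apply add_le_add (norm_sub_le _ _) le_rfl
        _ ≤ (R * dist p q + 4 * δ * R * dist p q) + ((2 * δ + c) * R * dist p q) * ρ := by
            apply add_le_add (add_le_add b1 b2) b4
        _ = (1 + 4 * δ + ρ * (2 * δ + c)) * (R * dist p q) := by ring
        _ ≤ ((1 + c) * lipNorm g) * dist p q := hchain
    have hGb : ∀ p q : M, ‖G p - G q‖ ≤ ((1 + c) * lipNorm g) * dist p q := by
      intro p q
      rw [hΓsup (G p - G q)]
      apply Real.sSup_le _ (mul_nonneg hL0 dist_nonneg)
      rintro x ⟨φ, hφ, rfl⟩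
      rw [← Real.norm_eq_abs]
      exact hGφ φ hφ p q
    -- value at the attaining pair
    have hd' : 0 < dist r' s' := dist_pos.mpr hrs
    have hlow : ((1 + c) * lipNorm g) * dist r' s' ≤ ‖G r' - G s'‖ := by
      have h1 : y₁ (G r' - G s') = (1 + c) * (g r' - g s') := by
        rw [map_sub, hy₁G, hy₁G]; ring
      have h2 : ‖y₁ (G r' - G s')‖ ≤ ‖G r' - G s'‖ := by
        calc ‖y₁ (G r' - G s')‖ ≤ ‖y₁‖ * ‖G r' - G s'‖ := y₁.le_opNorm _
        _ ≤ 1 * ‖G r' - G s'‖ := mul_le_mul_of_nonneg_right hy₁n (norm_nonneg _)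
        _ = ‖G r' - G s'‖ := one_mul _
      rw [h1] at h2
      have h3 : ‖(1 + c) * (g r' - g s')‖ = (1 + c) * (lipNorm g * dist r' s') := by
        rw [norm_mul, hgatt, Real.norm_eq_abs, abs_of_pos (by linarith : (0:ℝ) < 1 + c)]
      have hexp5 : (1 + c) * (lipNorm g * dist r' s')
          = ((1 + c) * lipNorm g) * dist r' s' := by ring
      linarith [h2, h3, hexp5]
    have hGrs : ‖G r' - G s'‖ = ((1 + c) * lipNorm g) * dist r' s' :=
      le_antisymm (hGb r' s') hlow
    have hlip : lipNorm G = (1 + c) * lipNorm g := by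
      apply le_antisymm (lipNorm_le' hL0 hGb)
      have h1 : ‖G r' - G s'‖ / dist r' s' ≤ lipNorm G :=
        le_csSup (lipNorm_bddAbove hGb) ⟨r', s', hrs, rfl⟩
      rwa [hGrs, mul_div_assoc, div_self hd'.ne', mul_one] at h1
    -- G is in Lip₀
    have hGLip : IsLip0 z G := by
      constructor
      · refine ⟨((1 + c) * lipNorm g).toNNReal, LipschitzWith.of_dist_le_mul fun p q => ?_⟩
        rw [dist_eq_norm]
        calc ‖G p - G q‖ ≤ ((1 + c) * lipNorm g) * dist p q := hGb p q
        _ = (((1 + c) * lipNorm g).toNNReal : ℝ) * dist p q := by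
            rw [Real.coe_toNNReal _ hL0]
      · rw [hGdef]
        simp [hTz, hgz, map_zero]
    -- approximation
    have happx : ∀ φ ∈ Γ, ∀ p q : M,
        ‖φ ((G p - T p) - (G q - T q))‖ ≤ ((6 * δ + c) * R) * dist p q := by
      intro φ hφ p q
      have hGx : ∀ x : M, φ (G x) = φ (T x) - φ (F (T x)) + ((1 + c) * g x) * φ (F e) := by
        intro x
        rw [hGdef]
        simp only [map_add, map_sub, _root_.map_smul, smul_eq_mul]
      have hid : φ ((G p - T p) - (G q - T q))
          = -((φ (F (T p)) - φ (F (T q))) - (f p - f q) * φ (F e))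
            + ((1 + c) * (g p - g q) - (f p - f q)) * φ (F e) := by
        have h1 : φ ((G p - T p) - (G q - T q)) = (φ (G p) - φ (T p)) - (φ (G q) - φ (T q)) := by
          simp [map_sub]
        rw [h1, hGx p, hGx q]; ring
      rw [hid]
      have b2 := hD φ hφ p q
      have b3 : ‖(1 + c) * (g p - g q) - (f p - f q)‖ ≤ (2 * δ + c) * R * dist p q := by
        have hid2 : (1 + c) * (g p - g q) - (f p - f q)
            = (1 + c) * ((g p - f p) - (g q - f q)) + c * (f p - f q) := by ring
        rw [hid2]
        calc ‖(1 + c) * ((g p - f p) - (g q - f q)) + c * (f p - f q)‖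
            ≤ ‖(1 + c) * ((g p - f p) - (g q - f q))‖ + ‖c * (f p - f q)‖ := norm_add_le _ _
        _ ≤ (1 + c) * ((δ * R) * dist p q) + c * (R * dist p q) := by
            apply add_le_add
            · rw [norm_mul, Real.norm_eq_abs, abs_of_pos (by linarith : (0:ℝ) < 1 + c)]
              exact mul_le_mul_of_nonneg_left (hgfd p q) (by linarith)
            · rw [norm_mul, Real.norm_eq_abs, abs_of_pos hc0]
              exact mul_le_mul_of_nonneg_left (hfR p q) hc0.le
        _ ≤ (2 * δ + c) * R * dist p q := by
            have hcd : c * (δ * R * dist p q) ≤ 1 * (δ * R * dist p q) :=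
              mul_le_mul_of_nonneg_right hc1
                (mul_nonneg (mul_nonneg hδ0.le hR.le) dist_nonneg)
            linarith [hcd]
      have bt : ‖φ (F e)‖ ≤ 1 := by
        calc ‖φ (F e)‖ ≤ ‖φ‖ * ‖F e‖ := φ.le_opNorm _
        _ ≤ 1 * 1 := mul_le_mul (hΓ1 φ hφ) (le_of_eq hFe1) (norm_nonneg _) zero_le_one
        _ = 1 := one_mul _
      have b4 : ‖((1 + c) * (g p - g q) - (f p - f q)) * φ (F e)‖
          ≤ (2 * δ + c) * R * dist p q := by
        rw [norm_mul]
        calc ‖(1 + c) * (g p - g q) - (f p - f q)‖ * ‖φ (F e)‖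
            ≤ ((2 * δ + c) * R * dist p q) * 1 :=
            mul_le_mul b3 bt (norm_nonneg _)
              (mul_nonneg (mul_nonneg (by linarith) hR.le) dist_nonneg)
        _ = (2 * δ + c) * R * dist p q := mul_one _
      calc ‖-((φ (F (T p)) - φ (F (T q))) - (f p - f q) * φ (F e))
            + ((1 + c) * (g p - g q) - (f p - f q)) * φ (F e)‖
          ≤ ‖-((φ (F (T p)) - φ (F (T q))) - (f p - f q) * φ (F e))‖
            + ‖((1 + c) * (g p - g q) - (f p - f q)) * φ (F e)‖ := norm_add_le _ _
      _ = ‖(φ (F (T p)) - φ (F (T q))) - (f p - f q) * φ (F e)‖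
            + ‖((1 + c) * (g p - g q) - (f p - f q)) * φ (F e)‖ := by rw [norm_neg]
      _ ≤ 4 * δ * R * dist p q + (2 * δ + c) * R * dist p q := add_le_add b2 b4
      _ = ((6 * δ + c) * R) * dist p q := by ring
    have happrox : lipNorm (fun x => G x - T x) < ε := by
      have h1 : lipNorm (fun x => G x - T x) ≤ (6 * δ + c) * R := by
        apply lipNorm_le' (mul_nonneg (by linarith) hR.le)
        intro p q
        show ‖(G p - T p) - (G q - T q)‖ ≤ _
        rw [hΓsup ((G p - T p) - (G q - T q))]
        apply Real.sSup_le _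
          (mul_nonneg (mul_nonneg (by linarith) hR.le) dist_nonneg)
        rintro x ⟨φ, hφ, rfl⟩
        rw [← Real.norm_eq_abs]
        exact happx φ hφ p q
      have h3 : δ * (64 * (R + 1)) ≤ ε * (1 - ρ) := by
        rw [← le_div_iff₀ hR1]
        exact hδε
      have hcR : c * (1 - ρ) * R = 11 * δ * R := by rw [hcρ]
      have h4 : (6 * δ + c) * R * (1 - ρ) ≤ 17 * δ * R := by
        have hexp6 : 17 * δ * R - (6 * δ + c) * R * (1 - ρ)
            = 11 * δ * R - c * (1 - ρ) * R + 6 * (δ * R * ρ) := by ring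
        linarith [hexp6, hcR, mul_nonneg (mul_nonneg hδ0.le hR.le) hρ0]
      have h5 : 17 * δ * R < 64 * δ * (R + 1) := by
        have := mul_pos hδ0 hR
        linarith [this, hδ0]
      have h6 : (6 * δ + c) * R * (1 - ρ) < ε * (1 - ρ) := by linarith
      have h2 : (6 * δ + c) * R < ε := lt_of_mul_lt_mul_right h6 hρ'.le
      exact lt_of_le_of_lt h1 h2
    exact ⟨G, hGLip, ⟨r', s', hrs, by rw [hlip]; exact hGrs⟩, happrox⟩
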